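/- Let 0 < σ < 1, 1 ≤ p ≤ q < ∞, and let g ∈ L¹_loc(ℝ^d). Then ‖g‖_{L^q(ℝ^d)} ≤ C ( ‖g‖_{L^p(ℝ^d)} + ( ∫_{ℝ^d} ( ∫_{ℝ^d} |g(x)−g(y)|^q / |x−y|^{σq+d} dy )^{p/q} dx )^{1/p} ), with C depending only on d, σ, p, q. -/

import Mathlib

open MeasureTheory ENNReal Set

section aux

lemma my_tsum_rpow {ι : Type*} [Countable ι] (a : ι → ℝ≥0∞) {θ : ℝ} (h0 : 0 < θ) (h1 : θ ≤ 1) :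
    (∑' i, a i) ^ θ ≤ ∑' i, a i ^ θ := by
  have hfin : ∀ s : Finset ι, (∑ i ∈ s, a i) ^ θ ≤ ∑ i ∈ s, a i ^ θ := by
    intro s
    induction s using Finset.cons_induction with
    | empty => simp [ENNReal.zero_rpow_of_pos h0]
    | cons i s hi ih =>
      rw [Finset.sum_cons, Finset.sum_cons]
      exact (ENNReal.rpow_add_le_add_rpow _ _ h0.le h1).trans (add_le_add_right ih _)
  rw [ENNReal.tsum_eq_iSup_sum]
  have hmap : (⨆ s : Finset ι, ∑ i ∈ s, a i) ^ θ = ⨆ s : Finset ι, (∑ i ∈ s, a i) ^ θ := by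
    refine Monotone.map_iSup_of_continuousAt ?_ (ENNReal.monotone_rpow_of_nonneg h0.le) ?_
    · exact ENNReal.continuous_rpow_const.continuousAt
    · simp [ENNReal.zero_rpow_of_pos h0]
  rw [hmap]
  exact iSup_le fun s => (hfin s).trans (ENNReal.sum_le_tsum s)

private def Qc (d : ℕ) (z : Fin d → ℤ) : Set (Fin d → ℝ) :=
  univ.pi fun i => Ico ((z i : ℝ)/2) ((z i : ℝ)/2 + 1/2)

variable {d : ℕ}

private lemma Qc_meas (z : Fin d → ℤ) : MeasurableSet (Qc d z) :=
  MeasurableSet.univ_pi fun _ => measurableSet_Ico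

private lemma mem_Qc {z : Fin d → ℤ} {x : Fin d → ℝ} : x ∈ Qc d z ↔ ∀ i, z i = ⌊2 * x i⌋ := by
  simp only [Qc, mem_pi, mem_univ, forall_true_left, mem_Ico]
  refine forall_congr' fun i => ?_
  rw [eq_comm, Int.floor_eq_iff]
  constructor <;> rintro ⟨h1, h2⟩ <;> constructor <;> push_cast at * <;> linarith

private lemma Qc_cover : ⋃ z, Qc d z = univ := by
  ext x
  simp only [mem_iUnion, mem_univ, iff_true]
  exact ⟨fun i => ⌊2 * x i⌋, mem_Qc.2 fun i => rfl⟩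

private lemma Qc_disj : Pairwise (Function.onFun Disjoint (Qc d)) := by
  intro z z' hzz
  rw [Function.onFun, Set.disjoint_left]
  intro x hx hx'
  exact hzz (funext fun i => (mem_Qc.1 hx i).trans (mem_Qc.1 hx' i).symm)

private lemma Qc_vol (z : Fin d → ℤ) : volume (Qc d z) = (2 : ℝ≥0∞)⁻¹ ^ d := by
  rw [Qc, volume_pi_pi]
  have : ∀ i : Fin d, volume (Ico ((z i : ℝ)/2) ((z i : ℝ)/2 + 1/2)) = (2 : ℝ≥0∞)⁻¹ := by
    intro i
    rw [Real.volume_Ico]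
    norm_num
    rw [show (1:ℝ)/2 = 2⁻¹ by norm_num, ENNReal.ofReal_inv_of_pos (by norm_num), ENNReal.ofReal_ofNat]
  simp only [this, Finset.prod_const, Finset.card_univ, Fintype.card_fin]

private lemma Qc_edist {z : Fin d → ℤ} {x y : Fin d → ℝ} (hx : x ∈ Qc d z) (hy : y ∈ Qc d z) :
    edist x y ≤ 1 := by
  rw [edist_dist]
  refine ENNReal.ofReal_le_one.2 ?_
  rcases Nat.eq_zero_or_pos d with hd | hd
  · subst hd
    simp [dist_pi_le_iff zero_le_one]
  · refine le_of_lt ((dist_pi_lt_iff one_pos).2 fun i => ?_)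
    have h1 := hx i (mem_univ i)
    have h2 := hy i (mem_univ i)
    simp only [mem_Ico] at h1 h2
    rw [Real.dist_eq, abs_sub_lt_iff]
    constructor <;> linarith

/-- the core estimate for measurable functions -/
private lemma core (d : ℕ) (σ p q : ℝ) (hp : 1 ≤ p) (hpq : p ≤ q) (he0 : 0 ≤ σ * q + (d:ℝ))
    (f : (Fin d → ℝ) → ℝ) (hf : Measurable f) :
    (∫⁻ x, ((‖f x‖₊ : ℝ≥0∞)) ^ q) ^ (1/q) ≤
      (1 + ((2:ℝ≥0∞) * ((2:ℝ≥0∞) ^ (d+1)) ^ (1/p)) ^ ((q-p)/q)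
         + ((2:ℝ≥0∞) ^ (p:ℝ) * (2:ℝ≥0∞) ^ (d+1)) ^ (1/p)) *
        ((∫⁻ x, ((‖f x‖₊ : ℝ≥0∞)) ^ p) ^ (1/p) +
         (∫⁻ x, (∫⁻ y, ((‖f x - f y‖₊ : ℝ≥0∞) ^ q) /
             (edist x y ^ (σ * q + d))) ^ (p / q)) ^ (1 / p)) := by
  have hq1 : (1:ℝ) ≤ q := hp.trans hpq
  have hp0 : (0:ℝ) < p := lt_of_lt_of_le one_pos hp
  have hq0 : (0:ℝ) < q := lt_of_lt_of_le one_pos hq1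
  have hθ0 : (0:ℝ) < p/q := div_pos hp0 hq0
  have hθ1 : p/q ≤ 1 := (div_le_one hq0).2 hpq
  set e := σ * q + (d:ℝ) with he
  set c1 := ((2:ℝ≥0∞) * ((2:ℝ≥0∞) ^ (d+1)) ^ (1/p)) ^ ((q-p)/q) with hc1
  set c2 := ((2:ℝ≥0∞) ^ (p:ℝ) * (2:ℝ≥0∞) ^ (d+1)) ^ (1/p) with hc2
  set Aq := ∫⁻ x, ((‖f x‖₊ : ℝ≥0∞)) ^ q with hAq
  set Ap := ∫⁻ x, ((‖f x‖₊ : ℝ≥0∞)) ^ p with hApdef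
  set Jp := ∫⁻ x, (∫⁻ y, ((‖f x - f y‖₊ : ℝ≥0∞) ^ q) / (edist x y ^ e)) ^ (p / q) with hJpdef
  have hGm : Measurable fun x => ((‖f x‖₊ : ℝ≥0∞)) := hf.nnnorm.coe_nnreal_ennreal
  have hGqm : Measurable fun x => ((‖f x‖₊ : ℝ≥0∞)) ^ q := hGm.pow measurable_const
  have hGpm : Measurable fun x => ((‖f x‖₊ : ℝ≥0∞)) ^ p := hGm.pow measurable_const
  -- the seminorm integrand as a function
  set FF : (Fin d → ℝ) → ℝ≥0∞ :=
    fun x => ∫⁻ y, ((‖f x - f y‖₊ : ℝ≥0∞) ^ q) / (edist x y ^ e) with hFFdef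
  have hJp' : Jp = ∫⁻ x, FF x ^ (p / q) := rfl
  have hFFm : Measurable FF := by
    have h1 : Measurable fun z : (Fin d → ℝ) × (Fin d → ℝ) =>
        ((‖f z.1 - f z.2‖₊ : ℝ≥0∞) ^ q) / (edist z.1 z.2 ^ e) :=
      (((hf.comp measurable_fst).sub (hf.comp measurable_snd)).nnnorm.coe_nnreal_ennreal.pow
        measurable_const).div (measurable_edist.pow measurable_const)
    exact Measurable.lintegral_prod_right
      (f := fun x y => ((‖f x - f y‖₊ : ℝ≥0∞) ^ q) / (edist x y ^ e)) h1
  have h2t : ((2:ℝ≥0∞) ^ (d+1)) ≠ ⊤ := ENNReal.pow_ne_top ENNReal.ofNat_ne_top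
  have h20 : ((2:ℝ≥0∞) ^ (d+1)) ≠ 0 := by positivity
  -- case Ap = 0
  rcases eq_or_ne Ap 0 with hAp0 | hAp0
  · have h0 : (fun x => ((‖f x‖₊ : ℝ≥0∞)) ^ p) =ᵐ[volume] 0 :=
      (lintegral_eq_zero_iff hGpm).1 hAp0
    have hq00 : Aq = 0 := by
      rw [hAq]
      refine (lintegral_eq_zero_iff hGqm).2 ?_
      filter_upwards [h0] with x hx
      simp only [Pi.zero_apply] at hx ⊢
      have hx0 : ((‖f x‖₊ : ℝ≥0∞)) = 0 := by
        rcases (ENNReal.rpow_eq_zero_iff.1 hx) with ⟨h, _⟩ | ⟨h, _⟩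
        · exact h
        · exact absurd h (by simp)
      rw [hx0, ENNReal.zero_rpow_of_pos hq0]
    rw [hq00, ENNReal.zero_rpow_of_pos (by positivity)]
    exact zero_le
  -- case Ap = ⊤
  rcases eq_or_ne Ap ⊤ with hApt | hApt
  · rw [hApt, ENNReal.top_rpow_of_pos (by positivity), top_add, ENNReal.mul_top (by simp)]
    exact le_top
  -- main case
  set lam := ((2:ℝ≥0∞) ^ (d+1) * Ap) ^ (1/p) with hlam
  have hXne0 : (2:ℝ≥0∞) ^ (d+1) * Ap ≠ 0 := mul_ne_zero h20 hAp0
  have hXnet : (2:ℝ≥0∞) ^ (d+1) * Ap ≠ ⊤ := ENNReal.mul_ne_top h2t hApt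
  have hlamp : lam ^ (p:ℝ) = (2:ℝ≥0∞) ^ (d+1) * Ap := by
    rw [hlam, ← ENNReal.rpow_mul, one_div, inv_mul_cancel₀ hp0.ne', ENNReal.rpow_one]
  have hlam0 : lam ≠ 0 := by
    rw [hlam]
    simp [ENNReal.rpow_eq_zero_iff, hXne0, hXnet, hp0, one_div, not_lt, inv_nonneg.2 hp0.le]
  have hlamt : lam ≠ ⊤ := ENNReal.rpow_ne_top_of_nonneg (by positivity) hXnet
  -- Chebyshev
  have cheb : volume {x | lam < ((‖f x‖₊ : ℝ≥0∞))} ≤ ((2:ℝ≥0∞) ^ (d+1))⁻¹ := by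
    have h1 : lam ^ (p:ℝ) * volume {x | lam ^ (p:ℝ) ≤ ((‖f x‖₊ : ℝ≥0∞)) ^ p} ≤ Ap :=
      mul_meas_ge_le_lintegral hGpm _
    have hsub : {x | lam < ((‖f x‖₊ : ℝ≥0∞))} ⊆ {x | lam ^ (p:ℝ) ≤ ((‖f x‖₊ : ℝ≥0∞)) ^ p} :=
      fun x hx => ENNReal.rpow_le_rpow (le_of_lt hx) hp0.le
    have h2 : ((2:ℝ≥0∞) ^ (d+1) * volume {x | lam < ((‖f x‖₊ : ℝ≥0∞))}) * Ap ≤ 1 * Ap := by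
      rw [one_mul]
      calc ((2:ℝ≥0∞) ^ (d+1) * volume {x | lam < ((‖f x‖₊ : ℝ≥0∞))}) * Ap
          = ((2:ℝ≥0∞) ^ (d+1) * Ap) * volume {x | lam < ((‖f x‖₊ : ℝ≥0∞))} := by ring
        _ = lam ^ (p:ℝ) * volume {x | lam < ((‖f x‖₊ : ℝ≥0∞))} := by rw [hlamp]
        _ ≤ lam ^ (p:ℝ) * volume {x | lam ^ (p:ℝ) ≤ ((‖f x‖₊ : ℝ≥0∞)) ^ p} :=
            mul_le_mul_right (measure_mono hsub) _
        _ ≤ Ap := h1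
    have h3 := (ENNReal.mul_le_mul_iff_left hAp0 hApt).1 h2
    rw [ENNReal.le_inv_iff_mul_le, mul_comm]
    exact h3
  -- good part of each cube
  have hSm : MeasurableSet {x : Fin d → ℝ | ((‖f x‖₊ : ℝ≥0∞)) ≤ lam} :=
    measurableSet_le hGm measurable_const
  have hQS : ∀ z, ((2:ℝ≥0∞) ^ (d+1))⁻¹ ≤
      volume (Qc d z ∩ {x | ((‖f x‖₊ : ℝ≥0∞)) ≤ lam}) := by
    intro z
    have hsplit : volume (Qc d z) = volume (Qc d z ∩ {x | ((‖f x‖₊ : ℝ≥0∞)) ≤ lam})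
        + volume (Qc d z \ {x | ((‖f x‖₊ : ℝ≥0∞)) ≤ lam}) :=
      (measure_inter_add_diff _ hSm).symm
    have hdiff : volume (Qc d z \ {x | ((‖f x‖₊ : ℝ≥0∞)) ≤ lam})
        ≤ volume {x | lam < ((‖f x‖₊ : ℝ≥0∞))} :=
      measure_mono fun x hx => (Set.mem_setOf_eq ▸ not_le.1 hx.2)
    have hεε : ((2:ℝ≥0∞) ^ (d+1))⁻¹ + ((2:ℝ≥0∞) ^ (d+1))⁻¹ = (2:ℝ≥0∞)⁻¹ ^ d := by
      rw [pow_succ, ENNReal.mul_inv (Or.inl (pow_ne_zero _ two_ne_zero)) (Or.inl (ENNReal.pow_ne_top ENNReal.ofNat_ne_top)),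
        ← mul_add, ENNReal.inv_two_add_inv_two, mul_one, ENNReal.inv_pow]
    have h4 : ((2:ℝ≥0∞) ^ (d+1))⁻¹ + ((2:ℝ≥0∞) ^ (d+1))⁻¹
        ≤ volume (Qc d z ∩ {x | ((‖f x‖₊ : ℝ≥0∞)) ≤ lam}) + ((2:ℝ≥0∞) ^ (d+1))⁻¹ := by
      rw [hεε, ← Qc_vol z, hsplit]
      exact add_le_add_right (hdiff.trans cheb) _
    exact (ENNReal.add_le_add_iff_right (by simp [h20])).1 h4
  -- key pointwise bound
  have key : ∀ z, ∀ x ∈ Qc d z ∩ {x | ((‖f x‖₊ : ℝ≥0∞)) ≤ lam}, ∀ y ∈ Qc d z,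
      Set.indicator {y | 2 * lam < ((‖f y‖₊ : ℝ≥0∞))} (fun y => ((‖f y‖₊ : ℝ≥0∞)) ^ q) y
        ≤ (2:ℝ≥0∞) ^ (q:ℝ) * (((‖f x - f y‖₊ : ℝ≥0∞)) ^ q / edist x y ^ e) := by
    intro z x hx y hy
    by_cases hyE : y ∈ {y | 2 * lam < ((‖f y‖₊ : ℝ≥0∞))}
    · rw [Set.indicator_of_mem hyE]
      have hb : ((‖f y‖₊ : ℝ≥0∞)) ≤ ((‖f x - f y‖₊ : ℝ≥0∞)) + ((‖f x‖₊ : ℝ≥0∞)) := by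
        rw [← ENNReal.coe_add, ENNReal.coe_le_coe]
        calc ‖f y‖₊ = ‖f x - (f x - f y)‖₊ := by congr 1; ring
          _ ≤ ‖f x‖₊ + ‖f x - f y‖₊ := nnnorm_sub_le _ _
          _ = ‖f x - f y‖₊ + ‖f x‖₊ := add_comm _ _
      have h2a : 2 * ((‖f x‖₊ : ℝ≥0∞)) ≤ ((‖f y‖₊ : ℝ≥0∞)) :=
        le_trans (mul_le_mul_right hx.2 2) (le_of_lt hyE)
      have hcancel : ((‖f y‖₊ : ℝ≥0∞)) ≤ 2 * ((‖f x - f y‖₊ : ℝ≥0∞)) := by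
        have h6 : ((‖f y‖₊ : ℝ≥0∞)) + ((‖f y‖₊ : ℝ≥0∞))
            ≤ 2 * ((‖f x - f y‖₊ : ℝ≥0∞)) + ((‖f y‖₊ : ℝ≥0∞)) := by
          calc ((‖f y‖₊ : ℝ≥0∞)) + ((‖f y‖₊ : ℝ≥0∞))
              ≤ (((‖f x - f y‖₊ : ℝ≥0∞)) + ((‖f x‖₊ : ℝ≥0∞)))
                + (((‖f x - f y‖₊ : ℝ≥0∞)) + ((‖f x‖₊ : ℝ≥0∞))) := add_le_add hb hb
            _ = 2 * ((‖f x - f y‖₊ : ℝ≥0∞)) + 2 * ((‖f x‖₊ : ℝ≥0∞)) := by ring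
            _ ≤ 2 * ((‖f x - f y‖₊ : ℝ≥0∞)) + ((‖f y‖₊ : ℝ≥0∞)) := add_le_add_right h2a _
        exact (ENNReal.add_le_add_iff_right ENNReal.coe_ne_top).1 h6
      have hw : edist x y ^ e ≤ 1 := ENNReal.rpow_le_one (Qc_edist hx.1 hy) he0
      calc ((‖f y‖₊ : ℝ≥0∞)) ^ q ≤ (2 * ((‖f x - f y‖₊ : ℝ≥0∞))) ^ q :=
            ENNReal.rpow_le_rpow hcancel hq0.le
        _ = (2:ℝ≥0∞) ^ (q:ℝ) * ((‖f x - f y‖₊ : ℝ≥0∞)) ^ q :=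
            ENNReal.mul_rpow_of_nonneg _ _ hq0.le
        _ ≤ (2:ℝ≥0∞) ^ (q:ℝ) * (((‖f x - f y‖₊ : ℝ≥0∞)) ^ q / edist x y ^ e) := by
            refine mul_le_mul_right ?_ _
            rw [div_eq_mul_inv]
            exact le_mul_of_one_le_right' (ENNReal.one_le_inv.2 hw)
    · rw [Set.indicator_of_notMem hyE]
      exact zero_le
  -- cube masses
  set mz : (Fin d → ℤ) → ℝ≥0∞ := fun z => ∫⁻ y in Qc d z,
    Set.indicator {y | 2 * lam < ((‖f y‖₊ : ℝ≥0∞))} (fun y => ((‖f y‖₊ : ℝ≥0∞)) ^ q) y with hmz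
  have hEm : MeasurableSet {y : Fin d → ℝ | 2 * lam < ((‖f y‖₊ : ℝ≥0∞))} :=
    measurableSet_lt measurable_const hGm
  have hindm : Measurable (Set.indicator {y : Fin d → ℝ | 2 * lam < ((‖f y‖₊ : ℝ≥0∞))}
      (fun y => ((‖f y‖₊ : ℝ≥0∞)) ^ q)) := hGqm.indicator hEm
  -- single-point bound on each cube
  have hm1 : ∀ z, ∀ x ∈ Qc d z ∩ {x | ((‖f x‖₊ : ℝ≥0∞)) ≤ lam},
      mz z ≤ (2:ℝ≥0∞) ^ (q:ℝ) * FF x := by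
    intro z x hx
    have hmy : Measurable fun y => (2:ℝ≥0∞) ^ (q:ℝ) *
        (((‖f x - f y‖₊ : ℝ≥0∞)) ^ q / edist x y ^ e) :=
      measurable_const.mul
        ((((measurable_const.sub hf).nnnorm.coe_nnreal_ennreal.pow measurable_const)).div
          (measurable_edist_right.pow measurable_const))
    calc mz z ≤ ∫⁻ y in Qc d z, (2:ℝ≥0∞) ^ (q:ℝ) *
          (((‖f x - f y‖₊ : ℝ≥0∞)) ^ q / edist x y ^ e) :=
        setLIntegral_mono hmy (fun y hy => key z x hx y hy)
      _ ≤ ∫⁻ y, (2:ℝ≥0∞) ^ (q:ℝ) * (((‖f x - f y‖₊ : ℝ≥0∞)) ^ q / edist x y ^ e) :=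
        setLIntegral_le_lintegral _ _
      _ = (2:ℝ≥0∞) ^ (q:ℝ) * FF x := lintegral_const_mul _
        (((measurable_const.sub hf).nnnorm.coe_nnreal_ennreal.pow measurable_const).div
          (measurable_edist_right.pow measurable_const))
  -- integrated bound on each cube
  have hm2 : ∀ z, (mz z) ^ (p/q) * ((2:ℝ≥0∞) ^ (d+1))⁻¹
      ≤ (2:ℝ≥0∞) ^ (p:ℝ) * ∫⁻ x in Qc d z, FF x ^ (p/q) := by
    intro z
    have hpt : ∀ x ∈ Qc d z ∩ {x | ((‖f x‖₊ : ℝ≥0∞)) ≤ lam},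
        (mz z) ^ (p/q) ≤ (2:ℝ≥0∞) ^ (p:ℝ) * FF x ^ (p/q) := by
      intro x hx
      calc (mz z) ^ (p/q) ≤ ((2:ℝ≥0∞) ^ (q:ℝ) * FF x) ^ (p/q) :=
            ENNReal.rpow_le_rpow (hm1 z x hx) hθ0.le
        _ = ((2:ℝ≥0∞) ^ (q:ℝ)) ^ (p/q) * FF x ^ (p/q) :=
            ENNReal.mul_rpow_of_nonneg _ _ hθ0.le
        _ = (2:ℝ≥0∞) ^ (p:ℝ) * FF x ^ (p/q) := by
            rw [← ENNReal.rpow_mul]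
            congr 1
            field_simp
    calc (mz z) ^ (p/q) * ((2:ℝ≥0∞) ^ (d+1))⁻¹
        ≤ (mz z) ^ (p/q) * volume (Qc d z ∩ {x | ((‖f x‖₊ : ℝ≥0∞)) ≤ lam}) :=
          mul_le_mul_right (hQS z) _
      _ = ∫⁻ _x in Qc d z ∩ {x | ((‖f x‖₊ : ℝ≥0∞)) ≤ lam}, (mz z) ^ (p/q) :=
          (setLIntegral_const _ _).symm
      _ ≤ ∫⁻ x in Qc d z ∩ {x | ((‖f x‖₊ : ℝ≥0∞)) ≤ lam}, (2:ℝ≥0∞) ^ (p:ℝ) * FF x ^ (p/q) :=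
          setLIntegral_mono (measurable_const.mul (hFFm.pow measurable_const)) hpt
      _ ≤ ∫⁻ x in Qc d z, (2:ℝ≥0∞) ^ (p:ℝ) * FF x ^ (p/q) :=
          lintegral_mono_set inter_subset_left
      _ = (2:ℝ≥0∞) ^ (p:ℝ) * ∫⁻ x in Qc d z, FF x ^ (p/q) :=
          lintegral_const_mul _ (hFFm.pow measurable_const)
  -- summing over the partition
  have hsum1 : ∑' z, mz z = ∫⁻ y, Set.indicator {y | 2 * lam < ((‖f y‖₊ : ℝ≥0∞))}
      (fun y => ((‖f y‖₊ : ℝ≥0∞)) ^ q) y := by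
    rw [hmz, ← lintegral_iUnion (fun z => Qc_meas z) Qc_disj, Qc_cover, Measure.restrict_univ]
  have hsum2 : ∑' z, (∫⁻ x in Qc d z, FF x ^ (p/q)) = Jp := by
    rw [hJp', ← lintegral_iUnion (fun z => Qc_meas z) Qc_disj, Qc_cover, Measure.restrict_univ]
  -- the high part
  have high : (∫⁻ y, Set.indicator {y | 2 * lam < ((‖f y‖₊ : ℝ≥0∞))}
      (fun y => ((‖f y‖₊ : ℝ≥0∞)) ^ q) y)
      ≤ ((2:ℝ≥0∞) ^ (p:ℝ) * (2:ℝ≥0∞) ^ (d+1) * Jp) ^ (q/p) := by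
    have hA : (∑' z, mz z) ^ (p/q) ≤ ∑' z, (mz z) ^ (p/q) := my_tsum_rpow _ hθ0 hθ1
    have hB : (∑' z, (mz z) ^ (p/q)) * ((2:ℝ≥0∞) ^ (d+1))⁻¹ ≤ (2:ℝ≥0∞) ^ (p:ℝ) * Jp := by
      rw [← ENNReal.tsum_mul_right]
      calc ∑' z, (mz z) ^ (p/q) * ((2:ℝ≥0∞) ^ (d+1))⁻¹
          ≤ ∑' z, (2:ℝ≥0∞) ^ (p:ℝ) * ∫⁻ x in Qc d z, FF x ^ (p/q) := ENNReal.tsum_le_tsum hm2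
        _ = (2:ℝ≥0∞) ^ (p:ℝ) * Jp := by rw [ENNReal.tsum_mul_left, hsum2]
    have hC : (∑' z, mz z) ^ (p/q) ≤ (2:ℝ≥0∞) ^ (p:ℝ) * (2:ℝ≥0∞) ^ (d+1) * Jp := by
      have h7 : ((∑' z, (mz z) ^ (p/q)) * ((2:ℝ≥0∞) ^ (d+1))⁻¹) * (2:ℝ≥0∞) ^ (d+1)
          ≤ ((2:ℝ≥0∞) ^ (p:ℝ) * Jp) * (2:ℝ≥0∞) ^ (d+1) := mul_le_mul_left hB _
      rw [mul_assoc, ENNReal.inv_mul_cancel h20 h2t, mul_one] at h7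
      calc (∑' z, mz z) ^ (p/q) ≤ ∑' z, (mz z) ^ (p/q) := hA
        _ ≤ ((2:ℝ≥0∞) ^ (p:ℝ) * Jp) * (2:ℝ≥0∞) ^ (d+1) := h7
        _ = (2:ℝ≥0∞) ^ (p:ℝ) * (2:ℝ≥0∞) ^ (d+1) * Jp := by ring
    have h8 : (∑' z, mz z) = ((∑' z, mz z) ^ (p/q)) ^ (q/p) := by
      rw [← ENNReal.rpow_mul, div_mul_div_comm, mul_comm p q, div_self (by positivity),
        ENNReal.rpow_one]
    rw [← hsum1, h8]
    exact ENNReal.rpow_le_rpow hC (by positivity)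
  -- low part
  have low : (∫⁻ y in {y | 2 * lam < ((‖f y‖₊ : ℝ≥0∞))}ᶜ, ((‖f y‖₊ : ℝ≥0∞)) ^ q)
      ≤ (2 * lam) ^ (q - p) * Ap := by
    have hpt : ∀ y ∈ {y : Fin d → ℝ | 2 * lam < ((‖f y‖₊ : ℝ≥0∞))}ᶜ,
        ((‖f y‖₊ : ℝ≥0∞)) ^ q ≤ (2 * lam) ^ (q - p) * ((‖f y‖₊ : ℝ≥0∞)) ^ p := by
      intro y hy
      have hyle : ((‖f y‖₊ : ℝ≥0∞)) ≤ 2 * lam := not_lt.1 hy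
      rcases eq_or_ne ((‖f y‖₊ : ℝ≥0∞)) 0 with h0 | h0
      · rw [h0, ENNReal.zero_rpow_of_pos hq0]
        exact zero_le
      · calc ((‖f y‖₊ : ℝ≥0∞)) ^ q = ((‖f y‖₊ : ℝ≥0∞)) ^ (q - p + p) := by rw [sub_add_cancel]
          _ = ((‖f y‖₊ : ℝ≥0∞)) ^ (q - p) * ((‖f y‖₊ : ℝ≥0∞)) ^ p :=
            ENNReal.rpow_add _ _ h0 ENNReal.coe_ne_top
          _ ≤ (2 * lam) ^ (q - p) * ((‖f y‖₊ : ℝ≥0∞)) ^ p :=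
            mul_le_mul_left (ENNReal.rpow_le_rpow hyle (by linarith)) _
    calc (∫⁻ y in {y | 2 * lam < ((‖f y‖₊ : ℝ≥0∞))}ᶜ, ((‖f y‖₊ : ℝ≥0∞)) ^ q)
        ≤ ∫⁻ y in {y | 2 * lam < ((‖f y‖₊ : ℝ≥0∞))}ᶜ, (2 * lam) ^ (q - p) * ((‖f y‖₊ : ℝ≥0∞)) ^ p :=
          setLIntegral_mono (measurable_const.mul hGpm) hpt
      _ = (2 * lam) ^ (q - p) * ∫⁻ y in {y | 2 * lam < ((‖f y‖₊ : ℝ≥0∞))}ᶜ, ((‖f y‖₊ : ℝ≥0∞)) ^ p :=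
          lintegral_const_mul _ hGpm
      _ ≤ (2 * lam) ^ (q - p) * Ap :=
          mul_le_mul_right (setLIntegral_le_lintegral _ _) _
  -- splitting
  have hsplitq : Aq ≤ ((2:ℝ≥0∞) ^ (p:ℝ) * (2:ℝ≥0∞) ^ (d+1) * Jp) ^ (q/p)
      + (2 * lam) ^ (q - p) * Ap := by
    rw [hAq, ← lintegral_add_compl (fun x => ((‖f x‖₊ : ℝ≥0∞)) ^ q) hEm]
    refine add_le_add ?_ low
    rw [← lintegral_indicator hEm]
    exact high
  -- final constant juggling
  have hApow : (Ap ^ (1/p)) ^ (p:ℝ) = Ap := by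
    rw [← ENNReal.rpow_mul, one_div, inv_mul_cancel₀ hp0.ne', ENNReal.rpow_one]
  have hA0 : Ap ^ (1/p) ≠ 0 := (ENNReal.rpow_pos (pos_iff_ne_zero.2 hAp0) hApt).ne'
  have hAt : Ap ^ (1/p) ≠ ⊤ := ENNReal.rpow_ne_top_of_nonneg (by positivity) hApt
  have eq1 : ((2:ℝ≥0∞) ^ (p:ℝ) * (2:ℝ≥0∞) ^ (d+1) * Jp) ^ (q/p)
      = c2 ^ (q:ℝ) * (Jp ^ (1/p)) ^ (q:ℝ) := by
    rw [ENNReal.mul_rpow_of_nonneg _ _ (by positivity : (0:ℝ) ≤ q/p)]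
    congr 1
    · rw [hc2, ← ENNReal.rpow_mul, one_div, inv_mul_eq_div]
    · rw [← ENNReal.rpow_mul, one_div, inv_mul_eq_div]
  have eq2 : (2 * lam) ^ (q - p) * Ap = c1 ^ (q:ℝ) * (Ap ^ (1/p)) ^ (q:ℝ) := by
    have hlam' : 2 * lam = (2 * ((2:ℝ≥0∞) ^ (d+1)) ^ (1/p)) * Ap ^ (1/p) := by
      rw [hlam, ENNReal.mul_rpow_of_nonneg _ _ (by positivity), mul_assoc]
    calc (2 * lam) ^ (q - p) * Ap
        = ((2 * ((2:ℝ≥0∞) ^ (d+1)) ^ (1/p)) ^ (q-p) * (Ap ^ (1/p)) ^ (q-p))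
            * (Ap ^ (1/p)) ^ (p:ℝ) := by
          rw [hlam', ENNReal.mul_rpow_of_nonneg _ _ (by linarith : (0:ℝ) ≤ q - p), hApow]
      _ = (2 * ((2:ℝ≥0∞) ^ (d+1)) ^ (1/p)) ^ (q-p)
            * ((Ap ^ (1/p)) ^ (q-p) * (Ap ^ (1/p)) ^ (p:ℝ)) := mul_assoc _ _ _
      _ = (2 * ((2:ℝ≥0∞) ^ (d+1)) ^ (1/p)) ^ (q-p) * (Ap ^ (1/p)) ^ (q:ℝ) := by
          rw [← ENNReal.rpow_add _ _ hA0 hAt, sub_add_cancel]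
      _ = c1 ^ (q:ℝ) * (Ap ^ (1/p)) ^ (q:ℝ) := by
          congr 1
          rw [hc1, ← ENNReal.rpow_mul, div_mul_cancel₀ _ hq0.ne']
  have hc1le : c1 ^ (q:ℝ) ≤ (c1 + c2) ^ (q:ℝ) := ENNReal.rpow_le_rpow le_self_add hq0.le
  have hc2le : c2 ^ (q:ℝ) ≤ (c1 + c2) ^ (q:ℝ) := ENNReal.rpow_le_rpow le_add_self hq0.le
  have hfin : Aq ≤ ((c1 + c2) * (Ap ^ (1/p) + Jp ^ (1/p))) ^ (q:ℝ) := by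
    calc Aq ≤ ((2:ℝ≥0∞) ^ (p:ℝ) * (2:ℝ≥0∞) ^ (d+1) * Jp) ^ (q/p) + (2 * lam) ^ (q - p) * Ap :=
          hsplitq
      _ = c2 ^ (q:ℝ) * (Jp ^ (1/p)) ^ (q:ℝ) + c1 ^ (q:ℝ) * (Ap ^ (1/p)) ^ (q:ℝ) := by
          rw [eq1, eq2]
      _ ≤ (c1 + c2) ^ (q:ℝ) * (Jp ^ (1/p)) ^ (q:ℝ)
            + (c1 + c2) ^ (q:ℝ) * (Ap ^ (1/p)) ^ (q:ℝ) :=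
          add_le_add (mul_le_mul_left hc2le _) (mul_le_mul_left hc1le _)
      _ = (c1 + c2) ^ (q:ℝ) * ((Ap ^ (1/p)) ^ (q:ℝ) + (Jp ^ (1/p)) ^ (q:ℝ)) := by ring
      _ ≤ (c1 + c2) ^ (q:ℝ) * (Ap ^ (1/p) + Jp ^ (1/p)) ^ (q:ℝ) :=
          mul_le_mul_right (ENNReal.add_rpow_le_rpow_add _ _ hq1) _
      _ = ((c1 + c2) * (Ap ^ (1/p) + Jp ^ (1/p))) ^ (q:ℝ) :=
          (ENNReal.mul_rpow_of_nonneg _ _ hq0.le).symm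
  calc Aq ^ (1/q) ≤ (((c1 + c2) * (Ap ^ (1/p) + Jp ^ (1/p))) ^ (q:ℝ)) ^ (1/q) :=
        ENNReal.rpow_le_rpow hfin (by positivity)
    _ = (c1 + c2) * (Ap ^ (1/p) + Jp ^ (1/p)) := by
        rw [← ENNReal.rpow_mul, mul_one_div, div_self hq0.ne', ENNReal.rpow_one]
    _ ≤ (1 + c1 + c2) * (Ap ^ (1/p) + Jp ^ (1/p)) := by
        refine mul_le_mul_left ?_ _
        rw [add_assoc]
        exact le_add_self

end aux

/-- self-improvement of integrability: for `0 < σ < 1`, `1 ≤ p ≤ q < ∞`, and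
locally integrable `g` on `ℝ^d`,
`‖g‖_{L^q} ≤ C (‖g‖_{L^p} + (∫ (∫ |g(x)−g(y)|^q |x−y|^{−σq−d} dy)^{p/q} dx)^{1/p})`,
with `C = C(d,σ,p,q)`. -/
theorem stmt_6 (d : ℕ) (hd : 1 ≤ d) (σ p q : ℝ) (hσ0 : 0 < σ) (hσ1 : σ < 1)
    (hp : 1 ≤ p) (hpq : p ≤ q) :
    ∃ C : ℝ≥0∞, C ≠ ⊤ ∧
      ∀ g : (Fin d → ℝ) → ℝ, MeasureTheory.LocallyIntegrable g volume →
        eLpNorm g (ENNReal.ofReal q) volume ≤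
          C * (eLpNorm g (ENNReal.ofReal p) volume +
            (∫⁻ x, (∫⁻ y, ((‖g x - g y‖₊ : ℝ≥0∞) ^ q) /
                (edist x y ^ (σ * q + d))) ^ (p / q)) ^ (1 / p)) := by
  have hq1 : (1:ℝ) ≤ q := hp.trans hpq
  have hp0 : (0:ℝ) < p := lt_of_lt_of_le one_pos hp
  have hq0 : (0:ℝ) < q := lt_of_lt_of_le one_pos hq1
  refine ⟨1 + ((2:ℝ≥0∞) * ((2:ℝ≥0∞) ^ (d+1)) ^ (1/p)) ^ ((q-p)/q)
      + ((2:ℝ≥0∞) ^ (p:ℝ) * (2:ℝ≥0∞) ^ (d+1)) ^ (1/p), ?_, ?_⟩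
  · have h2t : ((2:ℝ≥0∞) ^ (d+1)) ≠ ⊤ := ENNReal.pow_ne_top ENNReal.ofNat_ne_top
    have h1 : ((2:ℝ≥0∞) * ((2:ℝ≥0∞) ^ (d+1)) ^ (1/p)) ^ ((q-p)/q) ≠ ⊤ :=
      ENNReal.rpow_ne_top_of_nonneg (div_nonneg (by linarith) hq0.le)
        (ENNReal.mul_ne_top ENNReal.ofNat_ne_top
          (ENNReal.rpow_ne_top_of_nonneg (by positivity) h2t))
    have h2 : ((2:ℝ≥0∞) ^ (p:ℝ) * (2:ℝ≥0∞) ^ (d+1)) ^ (1/p) ≠ ⊤ :=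
      ENNReal.rpow_ne_top_of_nonneg (by positivity)
        (ENNReal.mul_ne_top (ENNReal.rpow_ne_top_of_nonneg (by positivity) ENNReal.ofNat_ne_top) h2t)
    exact ENNReal.add_ne_top.2 ⟨ENNReal.add_ne_top.2 ⟨ENNReal.one_ne_top, h1⟩, h2⟩
  · intro g hg
    have hgm := hg.aestronglyMeasurable
    set f := hgm.mk g with hfdef
    have hfm : Measurable f := hgm.stronglyMeasurable_mk.measurable
    have hgf : g =ᵐ[volume] f := hgm.ae_eq_mk
    have h1 : eLpNorm g (ENNReal.ofReal q) volume = eLpNorm f (ENNReal.ofReal q) volume :=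
      eLpNorm_congr_ae hgf
    have h2 : eLpNorm g (ENNReal.ofReal p) volume = eLpNorm f (ENNReal.ofReal p) volume :=
      eLpNorm_congr_ae hgf
    have h3 : (∫⁻ x, (∫⁻ y, ((‖g x - g y‖₊ : ℝ≥0∞) ^ q) / (edist x y ^ (σ * q + d))) ^ (p / q))
        = ∫⁻ x, (∫⁻ y, ((‖f x - f y‖₊ : ℝ≥0∞) ^ q) / (edist x y ^ (σ * q + d))) ^ (p / q) := by
      refine lintegral_congr_ae ?_
      filter_upwards [hgf] with x hx
      congr 1
      refine lintegral_congr_ae ?_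
      filter_upwards [hgf] with y hy
      rw [hx, hy]
    rw [h1, h2, h3]
    have hqn : eLpNorm f (ENNReal.ofReal q) volume = (∫⁻ x, ((‖f x‖₊ : ℝ≥0∞)) ^ q) ^ (1/q) := by
      rw [eLpNorm_eq_lintegral_rpow_enorm_toReal (by simp [hq0]) ENNReal.ofReal_ne_top,
        ENNReal.toReal_ofReal hq0.le]
      simp only [enorm_eq_nnnorm]
    have hpn : eLpNorm f (ENNReal.ofReal p) volume = (∫⁻ x, ((‖f x‖₊ : ℝ≥0∞)) ^ p) ^ (1/p) := by
      rw [eLpNorm_eq_lintegral_rpow_enorm_toReal (by simp [hp0]) ENNReal.ofReal_ne_top,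
        ENNReal.toReal_ofReal hp0.le]
      simp only [enorm_eq_nnnorm]
    rw [hqn, hpn]
    exact core d σ p q hp hpq (add_nonneg (mul_nonneg hσ0.le hq0.le) (Nat.cast_nonneg d)) f hfm
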